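/- Let T be a spider with center v whose legs have orders n_1, ..., n_k. If exactly two legs have order ≡ 2 (mod 3) and all other legs have order ≡ 0 (mod 3), then v is in no maximum dissociation set of T, yet v is in some maximum dissociation set of the graph obtained by deleting either one of those two legs. -/
import Mathlib


open scoped Classical

/-- `F` is a dissociation set of `G`: the induced subgraph `G[F]` has maximum degree ≤ 1. -/
def IsDissocSet {V : Type*} (G : SimpleGraph V) (F : Set V) : Prop :=
  ∀ u ∈ F, ∀ w ∈ F, ∀ w' ∈ F, G.Adj u w → G.Adj u w' → w = w'

/-- `F` is a maximum dissociation set of `G`. -/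
def IsMaxDissocSet {V : Type*} (G : SimpleGraph V) (F : Set V) : Prop :=
  IsDissocSet G F ∧ ∀ F' : Set V, IsDissocSet G F' → F'.ncard ≤ F.ncard

/-- The dissociation number ψ(G). -/
noncomputable def dissNum {V : Type*} (G : SimpleGraph V) : ℕ :=
  sSup {n | ∃ F : Set V, IsDissocSet G F ∧ F.ncard = n}

/-- `F` is a maximum dissociation set of the induced subgraph `G[S]`. -/
def IsMaxDissocOn {V : Type*} (G : SimpleGraph V) (S F : Set V) : Prop :=
  F ⊆ S ∧ IsDissocSet G F ∧
    ∀ F' : Set V, F' ⊆ S → IsDissocSet G F' → F'.ncard ≤ F.ncard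

/-- The dissociation number of the induced subgraph `G[S]`. -/
noncomputable def dissNumOn {V : Type*} (G : SimpleGraph V) (S : Set V) : ℕ :=
  sSup {n | ∃ F : Set V, F ⊆ S ∧ IsDissocSet G F ∧ F.ncard = n}

/-- The spider with center `none` and `k` legs, leg `i` being a path on `n i` vertices
hanging from the center. -/
def spider (k : ℕ) (n : Fin k → ℕ) : SimpleGraph (Option (Σ i : Fin k, Fin (n i))) :=
  SimpleGraph.fromRel (fun a b =>
    (a = none ∧ ∃ (i : Fin k) (h : 0 < n i), b = some ⟨i, ⟨0, h⟩⟩) ∨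
    (∃ (i : Fin k) (j j' : Fin (n i)), a = some ⟨i, j⟩ ∧ b = some ⟨i, j'⟩ ∧ (j' : ℕ) = j + 1))

/-- The vertex set of the `i`-th leg of the spider (the subtree below the `i`-th child). -/
def legSet (k : ℕ) (n : Fin k → ℕ) (i : Fin k) : Set (Option (Σ i : Fin k, Fin (n i))) :=
  {x | ∃ j : Fin (n i), x = some ⟨i, j⟩}

/-! ### Auxiliary lemmas -/

/-- No three consecutive naturals in `T`. -/
def No3 (T : Finset ℕ) : Prop := ∀ j : ℕ, ¬(j ∈ T ∧ j + 1 ∈ T ∧ j + 2 ∈ T)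

lemma no3_subset {T T' : Finset ℕ} (h : T' ⊆ T) (hT : No3 T) : No3 T' := by
  intro j ⟨h1, h2, h3⟩
  exact hT j ⟨h h1, h h2, h h3⟩

lemma ico_bound : ∀ d a (T : Finset ℕ), No3 T → T ⊆ Finset.Ico a (a + d) →
    T.card ≤ d - d / 3 := by
  intro d
  induction d using Nat.strong_induction_on with
  | _ d ih =>
    intro a T h3 hsub
    by_cases hd : d < 3
    · have := Finset.card_le_card hsub
      rw [Nat.card_Ico] at this
      omega
    · have hsplit := Finset.card_filter_add_card_filter_not
        (s := T) (p := fun x => x < a + 3)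
      set T1 := T.filter (fun x => x < a + 3) with hT1
      set T2 := T.filter (fun x => ¬ x < a + 3) with hT2
      have h1 : T1.card ≤ 2 := by
        by_contra hc
        push_neg at hc
        have hsub1 : T1 ⊆ Finset.Ico a (a + 3) := by
          intro x hx
          rw [hT1, Finset.mem_filter] at hx
          have := hsub hx.1
          rw [Finset.mem_Ico] at this ⊢
          exact ⟨this.1, hx.2⟩
        have hcard : (Finset.Ico a (a + 3)).card ≤ T1.card := by
          rw [Nat.card_Ico]; omega
        have heq := Finset.eq_of_subset_of_card_le hsub1 hcard
        have hmem : ∀ x, a ≤ x → x < a + 3 → x ∈ T := by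
          intro x hx1 hx2
          have : x ∈ T1 := by rw [heq, Finset.mem_Ico]; omega
          rw [hT1, Finset.mem_filter] at this
          exact this.1
        exact h3 a ⟨hmem a le_rfl (by omega), hmem (a+1) (by omega) (by omega),
          hmem (a+2) (by omega) (by omega)⟩
      have h2 : T2.card ≤ (d - 3) - (d - 3) / 3 := by
        apply ih (d - 3) (by omega) (a + 3)
        · exact no3_subset (Finset.filter_subset _ _) h3
        · intro x hx
          rw [hT2, Finset.mem_filter] at hx
          have := hsub hx.1
          rw [Finset.mem_Ico] at this ⊢
          omega
      omega

lemma range_bound {m : ℕ} {T : Finset ℕ} (h3 : No3 T) (hsub : T ⊆ Finset.range m) :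
    T.card ≤ m - m / 3 := by
  have := ico_bound m 0 T h3 (by simpa using hsub)
  simpa using this

lemma range_bound_A2 {m : ℕ} {T : Finset ℕ} (h3 : No3 T) (hsub : T ⊆ Finset.range m)
    (h0 : 0 ∉ T) (hm : m % 3 = 2) : T.card ≤ m - m / 3 - 1 := by
  have hsub' : T ⊆ Finset.Ico 1 (1 + (m - 1)) := by
    intro x hx
    have hx' := hsub hx
    rw [Finset.mem_range] at hx'
    rw [Finset.mem_Ico]
    have : x ≠ 0 := fun h => h0 (h ▸ hx)
    omega
  have := ico_bound (m - 1) 1 T h3 hsub'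
  omega

lemma range_bound_B2 {m : ℕ} {T : Finset ℕ} (h3 : No3 T) (hsub : T ⊆ Finset.range m)
    (h1 : 1 ∉ T) (hm : m % 3 = 2) : T.card ≤ m - m / 3 - 1 := by
  have hsplit := Finset.card_filter_add_card_filter_not
    (s := T) (p := fun x => x < 2)
  have ha : T.filter (fun x => x < 2) ⊆ {0} := by
    intro x hx
    rw [Finset.mem_filter] at hx
    have : x ≠ 1 := fun h => h1 (h ▸ hx.1)
    have : x = 0 := by omega
    simp [this]
  have ha' : (T.filter (fun x => x < 2)).card ≤ 1 := by
    have := Finset.card_le_card ha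
    simpa using this
  have hb : (T.filter (fun x => ¬ x < 2)).card ≤ (m - 2) - (m - 2) / 3 := by
    apply ico_bound (m - 2) 2
    · exact no3_subset (Finset.filter_subset _ _) h3
    · intro x hx
      rw [Finset.mem_filter] at hx
      have := hsub hx.1
      rw [Finset.mem_range] at this
      rw [Finset.mem_Ico]
      omega
  omega

lemma count_ne2 (m : ℕ) : ((Finset.range m).filter (fun j => j % 3 ≠ 2)).card = m - m / 3 := by
  induction m with
  | zero => simp
  | succ m ih =>
    rw [Finset.range_add_one, Finset.filter_insert]
    by_cases h : m % 3 ≠ 2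
    · rw [if_pos h, Finset.card_insert_of_notMem (by simp)]
      omega
    · rw [if_neg h]
      omega

lemma count_12 (m : ℕ) : ((Finset.range m).filter (fun j => j % 3 = 1 ∨ j % 3 = 2)).card
    = m - (m + 2) / 3 := by
  induction m with
  | zero => simp
  | succ m ih =>
    rw [Finset.range_add_one, Finset.filter_insert]
    by_cases h : m % 3 = 1 ∨ m % 3 = 2
    · rw [if_pos h, Finset.card_insert_of_notMem (by simp)]
      omega
    · rw [if_neg h]
      omega

lemma count_pat (m : ℕ) :
    ((Finset.range m).filter (fun j => j = 0 ∨ (2 ≤ j ∧ j % 3 ≠ 1))).card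
    = m - (m + 1) / 3 := by
  induction m with
  | zero => simp
  | succ m ih =>
    rw [Finset.range_add_one, Finset.filter_insert]
    by_cases h : m = 0 ∨ (2 ≤ m ∧ m % 3 ≠ 1)
    · rw [if_pos h, Finset.card_insert_of_notMem (by simp)]
      omega
    · rw [if_neg h]
      omega

lemma card_mem_fin {m : ℕ} {p : ℕ → Prop} [DecidablePred p] (S : Finset (Fin m))
    (h : ∀ j : Fin m, j ∈ S ↔ p (j : ℕ)) :
    S.card = ((Finset.range m).filter p).card := by
  rw [← Finset.card_image_of_injective S Fin.val_injective]
  congr 1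
  ext a
  simp only [Finset.mem_image, Finset.mem_filter, Finset.mem_range]
  constructor
  · rintro ⟨j, hj, rfl⟩
    exact ⟨j.isLt, (h j).mp hj⟩
  · rintro ⟨ha, hp⟩
    exact ⟨⟨a, ha⟩, (h ⟨a, ha⟩).mpr hp, rfl⟩

section Spider

variable {k : ℕ} {n : Fin k → ℕ}

lemma adj_some_some {x y : Σ i : Fin k, Fin (n i)} :
    (spider k n).Adj (some x) (some y) ↔
      x.1 = y.1 ∧ ((y.2 : ℕ) = x.2 + 1 ∨ (x.2 : ℕ) = y.2 + 1) := by
  rw [spider, SimpleGraph.fromRel_adj]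
  constructor
  · rintro ⟨hne, h | h⟩
    · rcases h with ⟨h, -⟩ | ⟨i, j, j', hx, hy, hj⟩
      · exact absurd h (by simp)
      · obtain rfl : x = ⟨i, j⟩ := by simpa using hx
        obtain rfl : y = ⟨i, j'⟩ := by simpa using hy
        exact ⟨rfl, Or.inl hj⟩
    · rcases h with ⟨h, -⟩ | ⟨i, j, j', hy, hx, hj⟩
      · exact absurd h (by simp)
      · obtain rfl : y = ⟨i, j⟩ := by simpa using hy
        obtain rfl : x = ⟨i, j'⟩ := by simpa using hx
        exact ⟨rfl, Or.inr hj⟩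
  · rintro ⟨h1, h2⟩
    obtain ⟨i, j⟩ := x
    obtain ⟨i', j'⟩ := y
    obtain rfl : i = i' := h1
    simp only at h2
    have hne : j ≠ j' := by
      intro h; subst h; omega
    refine ⟨by simpa [Sigma.ext_iff] using hne, ?_⟩
    rcases h2 with h | h
    · exact Or.inl (Or.inr ⟨i, j, j', rfl, rfl, h⟩)
    · exact Or.inr (Or.inr ⟨i, j', j, rfl, rfl, h⟩)

lemma adj_none_some {x : Σ i : Fin k, Fin (n i)} :
    (spider k n).Adj none (some x) ↔ (x.2 : ℕ) = 0 := by
  rw [spider, SimpleGraph.fromRel_adj]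
  constructor
  · rintro ⟨hne, h | h⟩
    · rcases h with ⟨-, i, hi, hx⟩ | ⟨i, j, j', hx, -, -⟩
      · obtain rfl : x = ⟨i, ⟨0, hi⟩⟩ := by simpa using hx
        rfl
      · exact absurd hx (by simp)
    · rcases h with ⟨h, -⟩ | ⟨i, j, j', -, hy, -⟩
      · exact absurd h (by simp)
      · exact absurd hy (by simp)
  · intro h
    obtain ⟨i, j⟩ := x
    simp only at h
    refine ⟨by simp, Or.inl (Or.inl ⟨rfl, i, j.pos, ?_⟩)⟩
    congr 1
    exact Sigma.ext rfl (by simp [Fin.ext_iff, h])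

lemma adj_some_none {x : Σ i : Fin k, Fin (n i)} :
    (spider k n).Adj (some x) none ↔ (x.2 : ℕ) = 0 := by
  rw [SimpleGraph.adj_comm]; exact adj_none_some

/-- The set of indices of leg `i` belonging to `F`. -/
noncomputable def legFinset (n : Fin k → ℕ) (F : Set (Option (Σ i : Fin k, Fin (n i))))
    (i : Fin k) : Finset (Fin (n i)) :=
  Finset.univ.filter (fun j => some ⟨i, j⟩ ∈ F)

lemma card_decomp (F : Set (Option (Σ i : Fin k, Fin (n i)))) :
    F.ncard = (if none ∈ F then 1 else 0) + ∑ i, (legFinset n F i).card := by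
  rw [Set.ncard_eq_toFinset_card']
  have h1 : F.toFinset = Finset.univ.filter (· ∈ F) := by ext x; simp
  rw [h1, Finset.card_filter]
  rw [Fintype.sum_option]
  congr 1
  rw [← Finset.univ_sigma_univ, Finset.sum_sigma]
  congr 1
  ext i
  rw [legFinset, Finset.card_filter]

lemma mem_legFinset {F : Set (Option (Σ i : Fin k, Fin (n i)))} {i : Fin k}
    {j : Fin (n i)} : j ∈ legFinset n F i ↔ some ⟨i, j⟩ ∈ F := by
  rw [legFinset, Finset.mem_filter]
  simp

lemma mem_legImage {F : Set (Option (Σ i : Fin k, Fin (n i)))} {i : Fin k} {j : ℕ} :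
    j ∈ (legFinset n F i).image Fin.val ↔ ∃ h : j < n i, some ⟨i, ⟨j, h⟩⟩ ∈ F := by
  simp only [legFinset, Finset.mem_image, Finset.mem_filter, Finset.mem_univ, true_and]
  constructor
  · rintro ⟨a, ha, rfl⟩
    exact ⟨a.isLt, by simpa using ha⟩
  · rintro ⟨h, hm⟩
    exact ⟨⟨j, h⟩, hm, rfl⟩

lemma no3_leg {F : Set (Option (Σ i : Fin k, Fin (n i)))}
    (hF : IsDissocSet (spider k n) F) (i : Fin k) :
    No3 ((legFinset n F i).image Fin.val) := by
  rintro j ⟨hj0, hj1, hj2⟩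
  rw [mem_legImage] at hj0 hj1 hj2
  obtain ⟨l0, m0⟩ := hj0
  obtain ⟨l1, m1⟩ := hj1
  obtain ⟨l2, m2⟩ := hj2
  have e1 : (spider k n).Adj (some ⟨i, ⟨j+1, l1⟩⟩) (some ⟨i, ⟨j, l0⟩⟩) :=
    adj_some_some.mpr ⟨rfl, by simp⟩
  have e2 : (spider k n).Adj (some ⟨i, ⟨j+1, l1⟩⟩) (some ⟨i, ⟨j+2, l2⟩⟩) :=
    adj_some_some.mpr ⟨rfl, by simp⟩
  have := hF _ m1 _ m0 _ m2 e1 e2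
  simp [Sigma.ext_iff, Fin.ext_iff] at this

lemma legImage_subset_range {F : Set (Option (Σ i : Fin k, Fin (n i)))} {i : Fin k} :
    (legFinset n F i).image Fin.val ⊆ Finset.range (n i) := by
  intro j hj
  rw [mem_legImage] at hj
  exact Finset.mem_range.mpr hj.1

lemma legFinset_card_eq {F : Set (Option (Σ i : Fin k, Fin (n i)))} {i : Fin k} :
    (legFinset n F i).card = ((legFinset n F i).image Fin.val).card :=
  (Finset.card_image_of_injective _ Fin.val_injective).symm

lemma leg_bound {F : Set (Option (Σ i : Fin k, Fin (n i)))}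
    (hF : IsDissocSet (spider k n) F) (i : Fin k) :
    (legFinset n F i).card ≤ n i - n i / 3 := by
  rw [legFinset_card_eq]
  exact range_bound (no3_leg hF i) legImage_subset_range

lemma leg_bound2 {F : Set (Option (Σ i : Fin k, Fin (n i)))}
    (hF : IsDissocSet (spider k n) F) (hnone : none ∈ F) (i : Fin k)
    (hi : n i % 3 = 2) : (legFinset n F i).card ≤ n i - n i / 3 - 1 := by
  have hpos : 0 < n i := by omega
  rw [legFinset_card_eq]
  by_cases hz : some ⟨i, ⟨0, hpos⟩⟩ ∈ F
  · apply range_bound_B2 (no3_leg hF i) legImage_subset_range _ hi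
    rw [mem_legImage]
    rintro ⟨h1, hm1⟩
    have e1 : (spider k n).Adj (some ⟨i, ⟨0, hpos⟩⟩) none :=
      adj_some_none.mpr rfl
    have e2 : (spider k n).Adj (some ⟨i, ⟨0, hpos⟩⟩) (some ⟨i, ⟨1, h1⟩⟩) :=
      adj_some_some.mpr ⟨rfl, by simp⟩
    exact (Option.some_ne_none _) (hF _ hz _ hm1 _ hnone e2 e1)
  · apply range_bound_A2 (no3_leg hF i) legImage_subset_range _ hi
    rw [mem_legImage]
    rintro ⟨h, hm⟩
    exact hz hm

end Spider

theorem stmt9 (k : ℕ) (n : Fin k → ℕ) (hn : ∀ i, 1 ≤ n i)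
    (h2 : (Finset.univ.filter fun i => n i % 3 = 2).card = 2)
    (h0 : ∀ i, n i % 3 = 2 ∨ n i % 3 = 0) :
    (∀ F, IsMaxDissocSet (spider k n) F → none ∉ F) ∧
    ∀ i : Fin k, n i % 3 = 2 →
      ∃ F, IsMaxDissocOn (spider k n) (legSet k n i)ᶜ F ∧ none ∈ F := by
  classical
  obtain ⟨i₁, i₂, hne12, hfil⟩ := Finset.card_eq_two.mp h2
  have h21 : n i₁ % 3 = 2 := by
    have : i₁ ∈ Finset.univ.filter fun i => n i % 3 = 2 := by rw [hfil]; simp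
    simpa using this
  have h22 : n i₂ % 3 = 2 := by
    have : i₂ ∈ Finset.univ.filter fun i => n i % 3 = 2 := by rw [hfil]; simp
    simpa using this
  have hspec : ∀ i0, n i0 % 3 = 2 → i0 = i₁ ∨ i0 = i₂ := by
    intro i0 h
    have : i0 ∈ Finset.univ.filter fun i => n i % 3 = 2 := by simp [h]
    rw [hfil] at this
    simpa using this
  -- the canonical maximum dissociation set avoiding the center
  set F₀ : Set (Option (Σ i : Fin k, Fin (n i))) :=
    {x | ∃ p : Σ i : Fin k, Fin (n i), x = some p ∧ (p.2 : ℕ) % 3 ≠ 2} with hF₀def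
  have hmemF₀ : ∀ p : Σ i : Fin k, Fin (n i), some p ∈ F₀ ↔ (p.2 : ℕ) % 3 ≠ 2 := by
    intro p
    constructor
    · rintro ⟨q, hq, h⟩
      obtain rfl : p = q := by simpa using hq
      exact h
    · intro h
      exact ⟨p, rfl, h⟩
  have hnone₀ : none ∉ F₀ := by
    rintro ⟨q, hq, -⟩
    simp at hq
  have hdiss₀ : IsDissocSet (spider k n) F₀ := by
    rintro u hu w hw w' hw' a1 a2
    obtain ⟨⟨iu, ju⟩, rfl, hpu⟩ := hu
    cases w with
    | none => exact absurd hw hnone₀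
    | some x =>
      cases w' with
      | none => exact absurd hw' hnone₀
      | some x' =>
        obtain ⟨ix, jx⟩ := x
        obtain ⟨ix', jx'⟩ := x'
        obtain ⟨h1, hv⟩ := adj_some_some.mp a1
        obtain ⟨h1', hv'⟩ := adj_some_some.mp a2
        simp only at h1 h1' hv hv'
        subst h1
        subst h1'
        have hx : (jx : ℕ) % 3 ≠ 2 := (hmemF₀ _).mp hw
        have hx' : (jx' : ℕ) % 3 ≠ 2 := (hmemF₀ _).mp hw'
        have hju : (ju : ℕ) % 3 ≠ 2 := hpu
        have : (jx : ℕ) = (jx' : ℕ) := by omega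
        simp [Sigma.ext_iff, Fin.ext_iff, this]
  have hcard₀ : F₀.ncard = ∑ i0, (n i0 - n i0 / 3) := by
    rw [card_decomp, if_neg hnone₀]
    simp only [zero_add]
    apply Finset.sum_congr rfl
    intro i0 _
    have heq := card_mem_fin (p := fun j => j % 3 ≠ 2) (legFinset n F₀ i0) (fun j => by
      rw [mem_legFinset]
      exact hmemF₀ ⟨i0, j⟩)
    rw [heq, count_ne2]
  constructor
  · rintro F ⟨hFd, hFmax⟩ hnone
    have hb1 : (legFinset n F i₁).card ≤ n i₁ - n i₁ / 3 - 1 := leg_bound2 hFd hnone i₁ h21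
    have hb2 : (legFinset n F i₂).card ≤ n i₂ - n i₂ / 3 - 1 := leg_bound2 hFd hnone i₂ h22
    have hmem₂ : i₂ ∈ Finset.univ.erase i₁ :=
      Finset.mem_erase.mpr ⟨Ne.symm hne12, Finset.mem_univ _⟩
    have hsplit : ∀ g : Fin k → ℕ, ∑ i0, g i0
        = g i₁ + (g i₂ + ∑ i0 ∈ (Finset.univ.erase i₁).erase i₂, g i0) := by
      intro g
      rw [← Finset.add_sum_erase _ g (Finset.mem_univ i₁), ← Finset.add_sum_erase _ g hmem₂]
    have hrest : ∑ i0 ∈ (Finset.univ.erase i₁).erase i₂, (legFinset n F i0).card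
        ≤ ∑ i0 ∈ (Finset.univ.erase i₁).erase i₂, (n i0 - n i0 / 3) :=
      Finset.sum_le_sum (fun i0 _ => leg_bound hFd i0)
    have hFcard := card_decomp F
    rw [if_pos hnone, hsplit] at hFcard
    have hmax := hFmax F₀ hdiss₀
    rw [hcard₀, hsplit] at hmax
    have hψ1 : 2 ≤ n i₁ - n i₁ / 3 := by
      have := h21; omega
    have hψ2 : 2 ≤ n i₂ - n i₂ / 3 := by
      have := h22; omega
    omega
  · intro i hi
    have hii : i = i₁ ∨ i = i₂ := hspec i hi
    set i' : Fin k := if i = i₁ then i₂ else i₁ with hi'def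
    have hkey : i' ≠ i ∧ n i' % 3 = 2 := by
      rcases hii with rfl | rfl
      · rw [hi'def, if_pos rfl]
        exact ⟨Ne.symm hne12, h22⟩
      · rw [hi'def, if_neg (Ne.symm hne12)]
        exact ⟨hne12, h21⟩
    obtain ⟨hne', hm'⟩ := hkey
    have hrest0 : ∀ i0, i0 ≠ i → i0 ≠ i' → n i0 % 3 = 0 := by
      intro i0 hA hB
      rcases h0 i0 with h | h
      · exfalso
        rcases hii with rfl | rfl
        · rw [hi'def, if_pos rfl] at hB
          rcases hspec i0 h with rfl | rfl
          · exact hA rfl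
          · exact hB rfl
        · rw [hi'def, if_neg (Ne.symm hne12)] at hB
          rcases hspec i0 h with rfl | rfl
          · exact hB rfl
          · exact hA rfl
      · exact h
    set F₁ : Set (Option (Σ i0 : Fin k, Fin (n i0))) :=
      insert none {x | ∃ p : Σ i0 : Fin k, Fin (n i0), x = some p ∧ p.1 ≠ i ∧
        ((p.1 = i' ∧ ((p.2 : ℕ) = 0 ∨ (2 ≤ (p.2 : ℕ) ∧ (p.2 : ℕ) % 3 ≠ 1))) ∨
         (p.1 ≠ i' ∧ ((p.2 : ℕ) % 3 = 1 ∨ (p.2 : ℕ) % 3 = 2)))} with hF₁def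
    have hnone₁ : none ∈ F₁ := Set.mem_insert _ _
    have hmem₁ : ∀ p : Σ i0 : Fin k, Fin (n i0), some p ∈ F₁ ↔ (p.1 ≠ i ∧
        ((p.1 = i' ∧ ((p.2 : ℕ) = 0 ∨ (2 ≤ (p.2 : ℕ) ∧ (p.2 : ℕ) % 3 ≠ 1))) ∨
         (p.1 ≠ i' ∧ ((p.2 : ℕ) % 3 = 1 ∨ (p.2 : ℕ) % 3 = 2)))) := by
      intro p
      rw [hF₁def, Set.mem_insert_iff]
      constructor
      · rintro (h | ⟨q, hq, h⟩)
        · exact absurd h (by simp)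
        · obtain rfl : p = q := by simpa using hq
          exact h
      · intro h
        exact Or.inr ⟨p, rfl, h⟩
    have hsub₁ : F₁ ⊆ (legSet k n i)ᶜ := by
      rintro x hx hleg
      obtain ⟨j, rfl⟩ := hleg
      exact ((hmem₁ ⟨i, j⟩).mp hx).1 rfl
    have hdiss₁ : IsDissocSet (spider k n) F₁ := by
      have hcase_none : ∀ y, y ∈ F₁ → (spider k n).Adj none y →
          ∃ h : 0 < n i', y = some ⟨i', ⟨0, h⟩⟩ := by
        intro y hy ha
        cases y with
        | none => simp at ha
        | some x =>
          have hx0 : (x.2 : ℕ) = 0 := adj_none_some.mp ha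
          rcases ((hmem₁ x).mp hy).2 with ⟨hxi', -⟩ | ⟨-, hp2⟩
          · obtain ⟨ix, jx⟩ := x
            replace hxi' : ix = i' := hxi'
            replace hx0 : (jx : ℕ) = 0 := hx0
            subst hxi'
            exact ⟨jx.pos, by
              congr 1
              exact Sigma.ext rfl (by simp [Fin.ext_iff, hx0])⟩
          · replace hp2 : (x.2 : ℕ) % 3 = 1 ∨ (x.2 : ℕ) % 3 = 2 := hp2
            omega
      rintro u hu w hw w' hw' a1 a2
      cases u with
      | none =>
        obtain ⟨l1, rfl⟩ := hcase_none w hw a1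
        obtain ⟨l2, rfl⟩ := hcase_none w' hw' a2
        rfl
      | some pu =>
        obtain ⟨iu, ju⟩ := pu
        obtain ⟨hui, hpat⟩ := (hmem₁ ⟨iu, ju⟩).mp hu
        replace hpat : (iu = i' ∧ ((ju : ℕ) = 0 ∨ (2 ≤ (ju : ℕ) ∧ (ju : ℕ) % 3 ≠ 1))) ∨
            (iu ≠ i' ∧ ((ju : ℕ) % 3 = 1 ∨ (ju : ℕ) % 3 = 2)) := hpat
        -- helper facts for the mixed case
        have hmixed : ∀ x : Σ i0 : Fin k, Fin (n i0), some x ∈ F₁ →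
            (spider k n).Adj (some ⟨iu, ju⟩) (some x) → (ju : ℕ) = 0 → False := by
          intro x hx hax hj0
          have hiu : iu = i' := by
            rcases hpat with ⟨h, -⟩ | ⟨-, hB⟩
            · exact h
            · omega
          obtain ⟨ix, jx⟩ := x
          obtain ⟨hfst, hval⟩ := adj_some_some.mp hax
          replace hfst : iu = ix := hfst
          replace hval : (jx : ℕ) = (ju : ℕ) + 1 ∨ (ju : ℕ) = (jx : ℕ) + 1 := hval
          subst hfst
          have hvx : (jx : ℕ) = 1 := by omega
          rcases ((hmem₁ ⟨iu, jx⟩).mp hx).2 with ⟨-, hP⟩ | ⟨hc, -⟩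
          · replace hP : (jx : ℕ) = 0 ∨ (2 ≤ (jx : ℕ) ∧ (jx : ℕ) % 3 ≠ 1) := hP
            omega
          · exact hc hiu
        cases w with
        | none =>
          cases w' with
          | none => rfl
          | some x' =>
            have hj0 : (ju : ℕ) = 0 := adj_some_none.mp a1
            exact (hmixed x' hw' a2 hj0).elim
        | some x =>
          cases w' with
          | none =>
            have hj0 : (ju : ℕ) = 0 := adj_some_none.mp a2
            exact (hmixed x hw a1 hj0).elim
          | some x' =>
            obtain ⟨ix, jx⟩ := x
            obtain ⟨ix', jx'⟩ := x'
            obtain ⟨hf1, hv1⟩ := adj_some_some.mp a1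
            obtain ⟨hf2, hv2⟩ := adj_some_some.mp a2
            replace hf1 : iu = ix := hf1
            replace hv1 : (jx : ℕ) = (ju : ℕ) + 1 ∨ (ju : ℕ) = (jx : ℕ) + 1 := hv1
            replace hf2 : iu = ix' := hf2
            replace hv2 : (jx' : ℕ) = (ju : ℕ) + 1 ∨ (ju : ℕ) = (jx' : ℕ) + 1 := hv2
            subst hf1
            subst hf2
            have hPx : (iu = i' ∧ ((jx : ℕ) = 0 ∨ (2 ≤ (jx : ℕ) ∧ (jx : ℕ) % 3 ≠ 1))) ∨
                (iu ≠ i' ∧ ((jx : ℕ) % 3 = 1 ∨ (jx : ℕ) % 3 = 2)) :=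
              ((hmem₁ ⟨iu, jx⟩).mp hw).2
            have hPx' : (iu = i' ∧ ((jx' : ℕ) = 0 ∨ (2 ≤ (jx' : ℕ) ∧ (jx' : ℕ) % 3 ≠ 1))) ∨
                (iu ≠ i' ∧ ((jx' : ℕ) % 3 = 1 ∨ (jx' : ℕ) % 3 = 2)) :=
              ((hmem₁ ⟨iu, jx'⟩).mp hw').2
            by_cases hiu : iu = i'
            · have hAu : (ju : ℕ) = 0 ∨ (2 ≤ (ju : ℕ) ∧ (ju : ℕ) % 3 ≠ 1) := by
                rcases hpat with ⟨-, h⟩ | ⟨hc, -⟩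
                · exact h
                · exact absurd hiu hc
              have hAx : (jx : ℕ) = 0 ∨ (2 ≤ (jx : ℕ) ∧ (jx : ℕ) % 3 ≠ 1) := by
                rcases hPx with ⟨-, h⟩ | ⟨hc, -⟩
                · exact h
                · exact absurd hiu hc
              have hAx' : (jx' : ℕ) = 0 ∨ (2 ≤ (jx' : ℕ) ∧ (jx' : ℕ) % 3 ≠ 1) := by
                rcases hPx' with ⟨-, h⟩ | ⟨hc, -⟩
                · exact h
                · exact absurd hiu hc
              have : (jx : ℕ) = (jx' : ℕ) := by omega
              simp [Sigma.ext_iff, Fin.ext_iff, this]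
            · have hAu : (ju : ℕ) % 3 = 1 ∨ (ju : ℕ) % 3 = 2 := by
                rcases hpat with ⟨hc, -⟩ | ⟨-, h⟩
                · exact absurd hc hiu
                · exact h
              have hAx : (jx : ℕ) % 3 = 1 ∨ (jx : ℕ) % 3 = 2 := by
                rcases hPx with ⟨hc, -⟩ | ⟨-, h⟩
                · exact absurd hc hiu
                · exact h
              have hAx' : (jx' : ℕ) % 3 = 1 ∨ (jx' : ℕ) % 3 = 2 := by
                rcases hPx' with ⟨hc, -⟩ | ⟨-, h⟩
                · exact absurd hc hiu
                · exact h
              have : (jx : ℕ) = (jx' : ℕ) := by omega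
              simp [Sigma.ext_iff, Fin.ext_iff, this]
    -- cardinality computations for F₁
    have hleg_i : (legFinset n F₁ i).card = 0 := by
      rw [Finset.card_eq_zero, Finset.eq_empty_iff_forall_notMem]
      intro j hj
      exact ((hmem₁ ⟨i, j⟩).mp (mem_legFinset.mp hj)).1 rfl
    have hleg_i' : (legFinset n F₁ i').card = n i' - (n i' + 1) / 3 := by
      have heq := card_mem_fin (p := fun j => j = 0 ∨ (2 ≤ j ∧ j % 3 ≠ 1))
        (legFinset n F₁ i') (fun j => by
          rw [mem_legFinset]
          constructor
          · intro hj
            rcases ((hmem₁ ⟨i', j⟩).mp hj).2 with ⟨-, h⟩ | ⟨hc, -⟩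
            · exact h
            · exact absurd rfl hc
          · intro hA
            exact (hmem₁ ⟨i', j⟩).mpr ⟨hne', Or.inl ⟨rfl, hA⟩⟩)
      rw [heq, count_pat]
    have hleg_rest : ∀ i0, i0 ≠ i → i0 ≠ i' →
        (legFinset n F₁ i0).card = n i0 - n i0 / 3 := by
      intro i0 hA hB
      have heq := card_mem_fin (p := fun j => j % 3 = 1 ∨ j % 3 = 2)
        (legFinset n F₁ i0) (fun j => by
          rw [mem_legFinset]
          constructor
          · intro hj
            rcases ((hmem₁ ⟨i0, j⟩).mp hj).2 with ⟨hc, -⟩ | ⟨-, h⟩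
            · exact absurd hc hB
            · exact h
          · intro hA2
            exact (hmem₁ ⟨i0, j⟩).mpr ⟨hA, Or.inr ⟨hB, hA2⟩⟩)
      rw [heq, count_12]
      have := hrest0 i0 hA hB
      omega
    have hmem₂' : i' ∈ Finset.univ.erase i :=
      Finset.mem_erase.mpr ⟨hne', Finset.mem_univ _⟩
    have hsplit3 : ∀ g : Fin k → ℕ, ∑ i0, g i0
        = g i + (g i' + ∑ i0 ∈ (Finset.univ.erase i).erase i', g i0) := by
      intro g
      rw [← Finset.add_sum_erase _ g (Finset.mem_univ i), ← Finset.add_sum_erase _ g hmem₂']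
    have hF₁card : F₁.ncard = 1 + (0 + ((n i' - (n i' + 1) / 3)
        + ∑ i0 ∈ (Finset.univ.erase i).erase i', (n i0 - n i0 / 3))) := by
      have hre : ∑ i0 ∈ (Finset.univ.erase i).erase i', (legFinset n F₁ i0).card
          = ∑ i0 ∈ (Finset.univ.erase i).erase i', (n i0 - n i0 / 3) := by
        apply Finset.sum_congr rfl
        intro i0 hi0
        rw [Finset.mem_erase, Finset.mem_erase] at hi0
        exact hleg_rest i0 hi0.2.1 hi0.1
      rw [card_decomp, if_pos hnone₁, hsplit3, hleg_i, hleg_i', hre]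
    refine ⟨F₁, ⟨hsub₁, hdiss₁, ?_⟩, hnone₁⟩
    intro F' hsubF' hdissF'
    have hd := card_decomp F'
    rw [hsplit3] at hd
    have hA0 : (legFinset n F' i).card = 0 := by
      rw [Finset.card_eq_zero, Finset.eq_empty_iff_forall_notMem]
      intro j hj
      exact hsubF' (mem_legFinset.mp hj) ⟨j, rfl⟩
    have hrestle : ∑ i0 ∈ (Finset.univ.erase i).erase i', (legFinset n F' i0).card
        ≤ ∑ i0 ∈ (Finset.univ.erase i).erase i', (n i0 - n i0 / 3) :=
      Finset.sum_le_sum (fun i0 _ => leg_bound hdissF' i0)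
    have hn2 : 2 ≤ n i' := by omega
    by_cases hn' : none ∈ F'
    · have hbi' := leg_bound2 hdissF' hn' i' hm'
      rw [if_pos hn'] at hd
      omega
    · have hbi' := leg_bound hdissF' i'
      rw [if_neg hn'] at hd
      omega
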